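/- (KL bound implies performance degradation bound) Suppose for policies π_k, π_{k+1} on a finite ergodic MDP we have E_{s∼d_{π_k}}[KL(π_{k+1} ∥ π_k)[s]] ≤ δ + V, and the surrogate objective satisfies E_{s∼d_{π_k}, a∼π_{k+1}}[Ā^{π_k}(s,a)] ≥ 0. Then J(π_{k+1}) − J(π_k) ≥ −sqrt(2(δ + V)) · ν, where ν = σ^{π_{k+1}} · max_s |E_{a∼π_{k+1}}[Ā^{π_k}(s,a)]| and σ^{π_{k+1}} is a constant with D_TV(d_{π_{k+1}} ∥ d_{π_k}) ≤ σ^{π_{k+1}} E_{s∼d_{π_k}}[D_TV(π_{k+1}∥π_k)[s]]. -/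

import Mathlib

open Finset



private lemma k_mono : MonotoneOn (fun x : ℝ => (x + 1) * Real.log x - 2 * (x - 1)) (Set.Ioi 0) := by
  have hderiv : ∀ x ∈ Set.Ioi (0:ℝ), HasDerivAt (fun x : ℝ => (x + 1) * Real.log x - 2 * (x - 1))
      (Real.log x + (x + 1) / x - 2) x := by
    intro x hx
    have hx0 : x ≠ 0 := ne_of_gt hx
    have h1 : HasDerivAt (fun x : ℝ => (x + 1) * Real.log x)
        (1 * Real.log x + (x + 1) * x⁻¹) x :=
      ((hasDerivAt_id x).add_const 1).mul (Real.hasDerivAt_log hx0)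
    have h2 : HasDerivAt (fun x : ℝ => 2 * (x - 1)) 2 x := by
      simpa using ((hasDerivAt_id x).sub_const 1).const_mul 2
    refine (h1.sub h2).congr_deriv ?_
    ring
  apply monotoneOn_of_deriv_nonneg (convex_Ioi 0)
  · exact fun x hx => (hderiv x hx).continuousAt.continuousWithinAt
  · intro x hx
    rw [interior_Ioi] at hx
    exact (hderiv x hx).differentiableAt.differentiableWithinAt
  · intro x hx
    rw [interior_Ioi] at hx
    rw [(hderiv x hx).deriv]
    have hx0 : (0:ℝ) < x := hx
    have h : Real.log x⁻¹ ≤ x⁻¹ - 1 := Real.log_le_sub_one_of_pos (by positivity)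
    rw [Real.log_inv] at h
    have : 1 - x⁻¹ ≤ Real.log x := by linarith
    have h2 : (x + 1) / x = 1 + x⁻¹ := by field_simp
    rw [h2]; linarith

private lemma key_ineq {x : ℝ} (hx : 0 ≤ x) :
    3 * (x - 1) ^ 2 ≤ 2 * (x + 2) * (x * Real.log x - x + 1) := by
  set h : ℝ → ℝ := fun x => 2 * (x + 2) * (x * Real.log x - x + 1) - 3 * (x - 1) ^ 2 with hh
  suffices hs : 0 ≤ h x by simp only [hh] at hs; linarith
  have hcont : Continuous h := by
    apply Continuous.sub
    · exact (continuous_const.mul (continuous_id.add continuous_const)).mul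
        ((Real.continuous_mul_log.sub continuous_id).add continuous_const)
    · fun_prop
  have hderiv : ∀ y : ℝ, 0 < y → HasDerivAt h
      (4 * ((y + 1) * Real.log y - 2 * (y - 1))) y := by
    intro y hy
    have h1 : HasDerivAt (fun x : ℝ => 2 * (x + 2)) 2 y := by
      simpa using ((hasDerivAt_id y).add_const 2).const_mul 2
    have h2 : HasDerivAt (fun x : ℝ => x * Real.log x - x + 1) (Real.log y + 1 - 1) y :=
      ((Real.hasDerivAt_mul_log (ne_of_gt hy)).sub (hasDerivAt_id y)).add_const 1
    have h3 : HasDerivAt (fun x : ℝ => 3 * (x - 1) ^ 2) (3 * (2 * (y - 1))) y := by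
      simpa using (((hasDerivAt_id y).sub_const 1).pow 2).const_mul 3
    refine ((h1.mul h2).sub h3).congr_deriv ?_
    ring
  have h1 : h 1 = 0 := by simp [hh]
  rcases le_or_gt x 1 with hx1 | hx1
  · -- antitone on [0,1]
    have hanti : AntitoneOn h (Set.Icc 0 1) := by
      apply antitoneOn_of_deriv_nonpos (convex_Icc 0 1) hcont.continuousOn
      · intro y hy
        rw [interior_Icc] at hy
        exact (hderiv y hy.1).differentiableAt.differentiableWithinAt
      · intro y hy
        rw [interior_Icc] at hy
        rw [(hderiv y hy.1).deriv]
        have hk : (fun x : ℝ => (x + 1) * Real.log x - 2 * (x - 1)) y ≤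
            (fun x : ℝ => (x + 1) * Real.log x - 2 * (x - 1)) 1 :=
          k_mono hy.1 (Set.mem_Ioi.mpr one_pos) hy.2.le
        simp only [Real.log_one] at hk
        nlinarith
    have := hanti (Set.mem_Icc.mpr ⟨hx, hx1⟩) (Set.mem_Icc.mpr ⟨zero_le_one, le_refl 1⟩) hx1
    linarith
  · -- monotone on [1,∞)
    have hmono : MonotoneOn h (Set.Ici 1) := by
      apply monotoneOn_of_deriv_nonneg (convex_Ici 1) hcont.continuousOn
      · intro y hy
        rw [interior_Ici] at hy
        exact (hderiv y (lt_trans one_pos hy)).differentiableAt.differentiableWithinAt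
      · intro y hy
        rw [interior_Ici] at hy
        rw [(hderiv y (lt_trans one_pos hy)).deriv]
        have hk : (fun x : ℝ => (x + 1) * Real.log x - 2 * (x - 1)) 1 ≤
            (fun x : ℝ => (x + 1) * Real.log x - 2 * (x - 1)) y :=
          k_mono (Set.mem_Ioi.mpr one_pos) (Set.mem_Ioi.mpr (lt_trans one_pos hy)) hy.le
        simp only [Real.log_one] at hk
        nlinarith
    have := hmono (Set.mem_Ici.mpr (le_refl 1)) (Set.mem_Ici.mpr hx1.le) hx1.le
    linarith

private lemma pinsker {A : Type*} [Fintype A] {p q : A → ℝ}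
    (hp : ∀ a, 0 ≤ p a) (hq : ∀ a, 0 < q a)
    (hps : ∑ a, p a = 1) (hqs : ∑ a, q a = 1) :
    (∑ a, |p a - q a|) ^ 2 ≤ 2 * ∑ a, p a * Real.log (p a / q a) := by
  have hkey : ∀ a, 3 * (p a - q a) ^ 2 ≤
      2 * (p a + 2 * q a) * (p a * Real.log (p a / q a) - p a + q a) := by
    intro a
    have hq0 : (0:ℝ) < q a := hq a
    have hx : (0:ℝ) ≤ p a / q a := div_nonneg (hp a) hq0.le
    have k := key_ineq hx
    set x := p a / q a with hxdef
    have e1 : (x - 1) * q a = p a - q a := by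
      rw [hxdef]; field_simp
    have e2 : (x + 2) * q a = p a + 2 * q a := by
      rw [hxdef]; field_simp
    have e3 : (x * Real.log x - x + 1) * q a
        = p a * Real.log (p a / q a) - p a + q a := by
      rw [hxdef]; field_simp
    calc 3 * (p a - q a) ^ 2 = (3 * (x - 1) ^ 2) * q a ^ 2 := by
          rw [← e1]; ring
      _ ≤ (2 * (x + 2) * (x * Real.log x - x + 1)) * q a ^ 2 :=
          mul_le_mul_of_nonneg_right k (sq_nonneg _)
      _ = 2 * (((x + 2) * q a) * ((x * Real.log x - x + 1) * q a)) := by ring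
      _ = 2 * (p a + 2 * q a) * (p a * Real.log (p a / q a) - p a + q a) := by
          rw [e2, e3]; ring
  have hgpos : ∀ a ∈ (univ : Finset A), (0:ℝ) < p a + 2 * q a := by
    intro a _; have := hp a; have := hq a; linarith
  have titu := sq_sum_div_le_sum_sq_div univ (fun a => |p a - q a|) hgpos
  have hsum3 : ∑ a, (p a + 2 * q a) = 3 := by
    rw [Finset.sum_add_distrib, hps, ← Finset.mul_sum, hqs]; norm_num
  rw [hsum3] at titu
  have h2 : ∑ a, |p a - q a| ^ 2 / (p a + 2 * q a) ≤
      (2/3) * ∑ a, p a * Real.log (p a / q a) := by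
    have : ∀ a ∈ (univ : Finset A), |p a - q a| ^ 2 / (p a + 2 * q a) ≤
        (2/3) * (p a * Real.log (p a / q a) - p a + q a) := by
      intro a _
      rw [sq_abs, div_le_iff₀ (hgpos a (mem_univ a))]
      nlinarith [hkey a]
    calc ∑ a, |p a - q a| ^ 2 / (p a + 2 * q a)
        ≤ ∑ a, (2/3) * (p a * Real.log (p a / q a) - p a + q a) :=
          Finset.sum_le_sum this
      _ = (2/3) * ∑ a, p a * Real.log (p a / q a) := by
          rw [← Finset.mul_sum]
          congr 1
          rw [Finset.sum_add_distrib, Finset.sum_sub_distrib, hps, hqs]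
          ring
  have := titu.trans h2
  rw [div_le_iff₀ (by norm_num : (0:ℝ) < 3)] at this
  linarith

/-- KL bound implies performance degradation bound:
if `E_{s∼d_{π_k}}[KL(π_{k+1}∥π_k)[s]] ≤ δ + V` and the surrogate objective is
nonnegative, then `J(π_{k+1}) − J(π_k) ≥ −sqrt(2(δ+V))·ν` with
`ν = σ·max_s |E_{a∼π_{k+1}}[Ā^{π_k}(s,a)]|`, where `σ` satisfies the
stationary-distribution sensitivity bound. -/
theorem stmt_11 {S A : Type*} [Fintype S] [Fintype A] [Nonempty S]
    (P : S → A → S → ℝ) (r : S → A → S → ℝ)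
    (πk πn : S → A → ℝ) (d d' : S → ℝ)
    (hPnn : ∀ s a s', 0 ≤ P s a s') (hP : ∀ s a, ∑ s', P s a s' = 1)
    (hπkpos : ∀ s a, 0 < πk s a) (hπk : ∀ s, ∑ a, πk s a = 1)
    (hπnnn : ∀ s a, 0 ≤ πn s a) (hπn : ∀ s, ∑ a, πn s a = 1)
    (hdnn : ∀ s, 0 ≤ d s) (hdsum : ∑ s, d s = 1)
    (hd'nn : ∀ s, 0 ≤ d' s) (hd'sum : ∑ s, d' s = 1)
    -- d, d' stationary for the chains induced by π_k, π_{k+1}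
    (hdstat : ∀ s', ∑ s, d s * ∑ a, πk s a * P s a s' = d s')
    (hd'stat : ∀ s', ∑ s, d' s * ∑ a, πn s a * P s a s' = d' s')
    (J J' : ℝ)
    (hJ' : J' = ∑ s, d' s * ∑ a, πn s a * ∑ s', P s a s' * r s a s')
    (V : S → ℝ)
    (hV : ∀ s, V s = ∑ a, πk s a * ∑ s', P s a s' * (r s a s' - J + V s'))
    (Q : S → A → ℝ)
    (hQ : ∀ s a, Q s a = ∑ s', P s a s' * (r s a s' - J + V s'))
    (Adv : S → A → ℝ)
    (hA : ∀ s a, Adv s a = Q s a - V s)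
    (σ ν δ Vmax : ℝ) (hσnn : 0 ≤ σ)
    (hν : ν = σ * ⨆ s, |∑ a, πn s a * Adv s a|)
    -- sensitivity bound D_TV(d_{π_{k+1}}∥d_{π_k}) ≤ σ E_{s∼d}[D_TV(π_{k+1}∥π_k)[s]]
    (hsens : (1 / 2) * ∑ s, |d' s - d s| ≤
      σ * ∑ s, d s * ((1 / 2) * ∑ a, |πn s a - πk s a|))
    -- expected KL bound
    (hKL : ∑ s, d s * ∑ a, πn s a * Real.log (πn s a / πk s a) ≤ δ + Vmax)
    -- surrogate objective nonnegative
    (hsurr : 0 ≤ ∑ s, d s * ∑ a, πn s a * Adv s a) :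
    J' - J ≥ -(Real.sqrt (2 * (δ + Vmax)) * ν) := by
  classical
  -- abbreviations
  set g : S → ℝ := fun s => ∑ a, πn s a * Adv s a with hg
  -- Q rewritten
  have hQ' : ∀ s a, Q s a = (∑ s', P s a s' * r s a s') - J + ∑ s', P s a s' * V s' := by
    intro s a
    rw [hQ s a]
    have h : ∀ s', P s a s' * (r s a s' - J + V s') =
        P s a s' * r s a s' - P s a s' * J + P s a s' * V s' := fun s' => by ring
    simp_rw [h]
    rw [Finset.sum_add_distrib, Finset.sum_sub_distrib, ← Finset.sum_mul, hP s a, one_mul]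
  have step1 : ∀ s, g s = (∑ a, πn s a * Q s a) - V s := by
    intro s
    simp only [hg]
    simp_rw [hA, mul_sub]
    rw [Finset.sum_sub_distrib, ← Finset.sum_mul, hπn s, one_mul]
  have hQsum : ∀ s, ∑ a, πn s a * Q s a =
      (∑ a, πn s a * ∑ s', P s a s' * r s a s') - J
        + ∑ a, πn s a * ∑ s', P s a s' * V s' := by
    intro s
    have h : ∀ a, πn s a * Q s a =
        πn s a * (∑ s', P s a s' * r s a s') - πn s a * J
          + πn s a * (∑ s', P s a s' * V s') := by
      intro a; rw [hQ' s a]; ring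
    simp_rw [h]
    rw [Finset.sum_add_distrib, Finset.sum_sub_distrib, ← Finset.sum_mul, hπn s, one_mul]
  -- Fubini step for the V-term
  have T3 : ∑ s, d' s * ∑ a, πn s a * ∑ s', P s a s' * V s' = ∑ s', d' s' * V s' := by
    calc ∑ s, d' s * ∑ a, πn s a * ∑ s', P s a s' * V s'
        = ∑ s, ∑ s', ∑ a, d' s * (πn s a * (P s a s' * V s')) := by
          simp_rw [Finset.mul_sum]
          exact Finset.sum_congr rfl fun s _ => Finset.sum_comm
      _ = ∑ s', ∑ s, ∑ a, d' s * (πn s a * (P s a s' * V s')) := Finset.sum_comm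
      _ = ∑ s', (∑ s, d' s * ∑ a, πn s a * P s a s') * V s' := by
          refine Finset.sum_congr rfl fun s' _ => ?_
          conv_rhs => rw [Finset.sum_mul]
          refine Finset.sum_congr rfl fun s _ => ?_
          conv_rhs => rw [Finset.mul_sum, Finset.sum_mul]
          exact Finset.sum_congr rfl fun a _ => by ring
      _ = ∑ s', d' s' * V s' := Finset.sum_congr rfl fun s' _ => by rw [hd'stat]
  -- the performance difference identity
  have hid : ∑ s, d' s * g s = J' - J := by
    calc ∑ s, d' s * g s
        = ∑ s, (d' s * ∑ a, πn s a * Q s a - d' s * V s) := by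
          refine Finset.sum_congr rfl fun s _ => ?_
          rw [step1 s]; ring
      _ = (∑ s, d' s * ∑ a, πn s a * Q s a) - ∑ s, d' s * V s :=
          Finset.sum_sub_distrib _ _
      _ = ((∑ s, d' s * ∑ a, πn s a * ∑ s', P s a s' * r s a s')
            - (∑ s, d' s) * J
            + ∑ s, d' s * ∑ a, πn s a * ∑ s', P s a s' * V s')
          - ∑ s, d' s * V s := by
          congr 1
          have h : ∀ s, d' s * ∑ a, πn s a * Q s a =
              d' s * (∑ a, πn s a * ∑ s', P s a s' * r s a s') - d' s * J
                + d' s * (∑ a, πn s a * ∑ s', P s a s' * V s') := by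
            intro s; rw [hQsum s]; ring
          simp_rw [h]
          rw [Finset.sum_add_distrib, Finset.sum_sub_distrib, ← Finset.sum_mul]
      _ = J' - J := by
          rw [← hJ', hd'sum, one_mul, T3]; ring
  -- sup bound
  set M : ℝ := ⨆ s, |g s| with hM
  have hMle : ∀ s, |g s| ≤ M :=
    fun s => le_ciSup (Set.Finite.bddAbove (Set.finite_range fun s => |g s|)) s
  have hM0 : 0 ≤ M := le_trans (abs_nonneg _) (hMle (Classical.arbitrary S))
  -- split
  have hsplit : ∑ s, d' s * g s = (∑ s, d s * g s) + ∑ s, (d' s - d s) * g s := by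
    rw [← Finset.sum_add_distrib]
    exact Finset.sum_congr rfl fun s _ => by ring
  have h1 : -(M * ∑ s, |d' s - d s|) ≤ ∑ s, (d' s - d s) * g s := by
    have hterm : ∀ s ∈ (univ : Finset S), -(M * |d' s - d s|) ≤ (d' s - d s) * g s := by
      intro s _
      have habs : |(d' s - d s) * g s| ≤ |d' s - d s| * M := by
        rw [abs_mul]
        exact mul_le_mul_of_nonneg_left (hMle s) (abs_nonneg _)
      have := neg_abs_le ((d' s - d s) * g s)
      nlinarith
    have := Finset.sum_le_sum hterm
    calc -(M * ∑ s, |d' s - d s|) = ∑ s, -(M * |d' s - d s|) := by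
          rw [Finset.mul_sum, ← Finset.sum_neg_distrib]
      _ ≤ ∑ s, (d' s - d s) * g s := this
  -- Pinsker per state + Jensen
  set t : S → ℝ := fun s => (1 / 2) * ∑ a, |πn s a - πk s a| with ht
  set KLs : S → ℝ := fun s => ∑ a, πn s a * Real.log (πn s a / πk s a) with hKLs
  have htnn : ∀ s, 0 ≤ t s := by
    intro s
    have : (0:ℝ) ≤ ∑ a, |πn s a - πk s a| :=
      Finset.sum_nonneg fun a _ => abs_nonneg _
    simp only [ht]; linarith
  have hpin : ∀ s, 2 * t s ^ 2 ≤ KLs s := by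
    intro s
    have := pinsker (p := πn s) (q := πk s) (hπnnn s) (hπkpos s) (hπn s) (hπk s)
    simp only [ht, hKLs]
    nlinarith [this]
  have hKLnn : ∀ s, 0 ≤ KLs s := fun s => le_trans (by positivity) (hpin s)
  have hδV : 0 ≤ δ + Vmax := by
    refine le_trans ?_ hKL
    exact Finset.sum_nonneg fun s _ => mul_nonneg (hdnn s) (hKLnn s)
  set T : ℝ := ∑ s, d s * t s with hT
  have hT0 : 0 ≤ T :=
    Finset.sum_nonneg fun s _ => mul_nonneg (hdnn s) (htnn s)
  have hjensen : T ^ 2 ≤ (δ + Vmax) / 2 := by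
    have hcs : (∑ s, d s * t s) ^ 2 ≤ (∑ s, d s) * ∑ s, d s * t s ^ 2 := by
      refine sum_sq_le_sum_mul_sum_of_sq_eq_mul univ
        (fun s _ => hdnn s) (fun s _ => mul_nonneg (hdnn s) (sq_nonneg _))
        (fun s _ => by ring)
      
    rw [hdsum, one_mul] at hcs
    have h2 : ∑ s, d s * t s ^ 2 ≤ (δ + Vmax) / 2 := by
      have hp2 : ∀ s ∈ (univ : Finset S), d s * t s ^ 2 ≤ d s * (KLs s / 2) := by
        intro s _
        refine mul_le_mul_of_nonneg_left ?_ (hdnn s)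
        have := hpin s; linarith
      calc ∑ s, d s * t s ^ 2 ≤ ∑ s, d s * (KLs s / 2) := Finset.sum_le_sum hp2
        _ = (1 / 2) * ∑ s, d s * KLs s := by
            rw [Finset.mul_sum]
            exact Finset.sum_congr rfl fun s _ => by ring
        _ ≤ (δ + Vmax) / 2 := by
            have : ∑ s, d s * KLs s ≤ δ + Vmax := hKL
            linarith
    exact hcs.trans h2
  have hTle : T ≤ Real.sqrt ((δ + Vmax) / 2) := by
    calc T = Real.sqrt (T ^ 2) := (Real.sqrt_sq hT0).symm
      _ ≤ Real.sqrt ((δ + Vmax) / 2) := Real.sqrt_le_sqrt hjensen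
  -- combine sensitivity
  have hL1 : ∑ s, |d' s - d s| ≤ 2 * σ * Real.sqrt ((δ + Vmax) / 2) := by
    have h := hsens
    have hσT : σ * T ≤ σ * Real.sqrt ((δ + Vmax) / 2) :=
      mul_le_mul_of_nonneg_left hTle hσnn
    linarith
  -- sqrt algebra
  have hsqrt : 2 * Real.sqrt ((δ + Vmax) / 2) = Real.sqrt (2 * (δ + Vmax)) := by
    have h4 : Real.sqrt 4 = 2 := by
      rw [show (4:ℝ) = 2 ^ 2 by norm_num, Real.sqrt_sq (by norm_num : (0:ℝ) ≤ 2)]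
    calc 2 * Real.sqrt ((δ + Vmax) / 2)
        = Real.sqrt 4 * Real.sqrt ((δ + Vmax) / 2) := by rw [h4]
      _ = Real.sqrt (4 * ((δ + Vmax) / 2)) := (Real.sqrt_mul (by norm_num) _).symm
      _ = Real.sqrt (2 * (δ + Vmax)) := by ring_nf
  -- final chain
  have hfin : -(Real.sqrt (2 * (δ + Vmax)) * ν) ≤ J' - J := by
    have hMl1 : M * ∑ s, |d' s - d s| ≤ M * (2 * σ * Real.sqrt ((δ + Vmax) / 2)) :=
      mul_le_mul_of_nonneg_left hL1 hM0
    have hdg : 0 ≤ ∑ s, d s * g s := hsurr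
    have : -(M * (2 * σ * Real.sqrt ((δ + Vmax) / 2))) ≤ J' - J := by
      rw [← hid, hsplit]
      have := h1
      nlinarith
    calc -(Real.sqrt (2 * (δ + Vmax)) * ν)
        = -(M * (2 * σ * Real.sqrt ((δ + Vmax) / 2))) := by
          rw [hν, ← hsqrt]; ring
      _ ≤ J' - J := this
  exact hfin
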